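/- Let P be a consensus matrix with invariant measure π, and let C_{P*P} = nPᵀΠP. Then R̄(C_{P*P}) ≤ (1/(n π_min p_min²)) R̄(G(P)), where R̄ denotes average effective resistance, G(P) is the undirected graph of P with unit conductances, and p_min is the minimum nonzero entry of P. -/

import Mathlib

open Matrix

/-- A consensus matrix: entrywise nonnegative, row-stochastic, irreducible
(for every pair of indices some power has a positive entry), with positive diagonal. -/
def IsConsensus {n : ℕ} (P : Matrix (Fin n) (Fin n) ℝ) : Prop :=
  (∀ i j, 0 ≤ P i j) ∧ (∀ i, (∑ j, P i j) = 1) ∧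
  (∀ i j, ∃ k : ℕ, 0 < (P ^ k) i j) ∧ (∀ i, 0 < P i i)

/-- `mu` is the invariant measure of `P`: strictly positive, sums to `1`,
and is a left fixed vector of `P`. -/
def IsInvMeasure {n : ℕ} (P : Matrix (Fin n) (Fin n) ℝ) (mu : Fin n → ℝ) : Prop :=
  (∀ i, 0 < mu i) ∧ (∑ i, mu i) = 1 ∧ (∀ j, (∑ i, mu i * P i j) = mu j)

/-- The time reversal `P* = Π⁻¹ Pᵀ Π` with `Π = diag(mu)`. -/
noncomputable def Pstar {n : ℕ} (P : Matrix (Fin n) (Fin n) ℝ) (mu : Fin n → ℝ) :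
    Matrix (Fin n) (Fin n) ℝ :=
  Matrix.diagonal (fun i => (mu i)⁻¹) * Pᵀ * Matrix.diagonal mu

/-- The graph Laplacian `L(C) = diag(C 𝟙) − C`. -/
def lap {n : ℕ} (C : Matrix (Fin n) (Fin n) ℝ) : Matrix (Fin n) (Fin n) ℝ :=
  Matrix.diagonal (fun i => ∑ j, C i j) - C

/-- A conductance matrix: symmetric, entrywise nonnegative, irreducible. -/
def IsConductance {n : ℕ} (C : Matrix (Fin n) (Fin n) ℝ) : Prop :=
  Cᵀ = C ∧ (∀ i j, 0 ≤ C i j) ∧ (∀ i j, ∃ k : ℕ, 0 < (C ^ k) i j)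

/-- The effective resistance between `a` and `b`: `v a - v b` for a solution `v`
of `L(C) v = e_a - e_b` (junk value `0` if no solution exists). -/
noncomputable def effRes {n : ℕ} (C : Matrix (Fin n) (Fin n) ℝ) (a b : Fin n) : ℝ :=
  open Classical in
  if h : ∃ v : Fin n → ℝ, lap C *ᵥ v = Pi.single a 1 - Pi.single b 1 then
    h.choose a - h.choose b
  else 0

/-- The average effective resistance `(1/(2 n²)) Σ_{u,v} R_{uv}(C)`. -/
noncomputable def avgRes {n : ℕ} (C : Matrix (Fin n) (Fin n) ℝ) : ℝ :=
  (1 / (2 * (n : ℝ) ^ 2)) * ∑ u, ∑ v, effRes C u v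

/-- The unit-conductance matrix of the undirected graph associated with `P`:
edge `{u,v}` iff `P u v ≠ 0` or `P v u ≠ 0`. -/
noncomputable def adjMat {n : ℕ} (P : Matrix (Fin n) (Fin n) ℝ) : Matrix (Fin n) (Fin n) ℝ :=
  Matrix.of fun i j => if i ≠ j ∧ (P i j ≠ 0 ∨ P j i ≠ 0) then (1 : ℝ) else 0

/-- The LQ cost `J(P) = (1/n) Σ_{t≥0} ‖P^t − 𝟙 muᵀ‖_F²`. -/
noncomputable def LQcost {n : ℕ} (P : Matrix (Fin n) (Fin n) ℝ) (mu : Fin n → ℝ) : ℝ :=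
  (1 / (n : ℝ)) *
    ∑' t : ℕ, ∑ i, ∑ j,
      ((P ^ t - Matrix.vecMulVec (fun _ => 1) mu : Matrix (Fin n) (Fin n) ℝ) i j) ^ 2

/-- The weighted LQ cost `J_w(P)`. -/
noncomputable def LQcostW {n : ℕ} (P : Matrix (Fin n) (Fin n) ℝ) (mu : Fin n → ℝ) : ℝ :=
  ∑' t : ℕ, Matrix.trace ((1 - Matrix.vecMulVec mu (fun _ => 1)) * Pᵀ ^ t *
    Matrix.diagonal mu * P ^ t * (1 - Matrix.vecMulVec (fun _ => 1) mu))

/-- The Green matrix `G(P) = Σ_{t≥0} (P^t − 𝟙 muᵀ)`. -/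
noncomputable def Green {n : ℕ} (P : Matrix (Fin n) (Fin n) ℝ) (mu : Fin n → ℝ) :
    Matrix (Fin n) (Fin n) ℝ :=
  ∑' t : ℕ, (P ^ t - Matrix.vecMulVec (fun _ => 1) mu)

/-- Out-degree (excluding self-loops) of node `i` in the directed graph of `P`. -/
noncomputable def outDeg {n : ℕ} (P : Matrix (Fin n) (Fin n) ℝ) (i : Fin n) : ℕ :=
  (Finset.univ.filter fun j => j ≠ i ∧ P i j ≠ 0).card

/-- In-degree (excluding self-loops) of node `j` in the directed graph of `P`. -/
noncomputable def inDeg {n : ℕ} (P : Matrix (Fin n) (Fin n) ℝ) (j : Fin n) : ℕ :=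
  (Finset.univ.filter fun i => i ≠ j ∧ P i j ≠ 0).card

lemma lap_quad {n : ℕ} (C : Matrix (Fin n) (Fin n) ℝ) (hC : Cᵀ = C) (x : Fin n → ℝ) :
    x ⬝ᵥ (lap C *ᵥ x) = (1/2) * ∑ i, ∑ j, C i j * (x i - x j)^2 := by
  have hsym : ∀ i j, C j i = C i j := fun i j => by
    conv_lhs => rw [← hC]
    rfl
  have lhs : x ⬝ᵥ (lap C *ᵥ x) = ∑ i, ∑ j, (C i j * x i * x i - C i j * x i * x j) := by
    simp only [lap, dotProduct, mulVec, Matrix.sub_apply, diagonal]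
    simp [dotProduct, Finset.mul_sum, mul_sub, sub_mul, Finset.sum_sub_distrib, of_apply,
      Finset.sum_ite_eq, mul_comm, mul_left_comm]
  have key : ∑ i, ∑ j, C i j * (x i - x j)^2
      = (∑ i, ∑ j, (C i j * x i * x i - C i j * x i * x j))
      + (∑ i, ∑ j, (C i j * x j * x j - C i j * x i * x j)) := by
    rw [← Finset.sum_add_distrib]
    refine Finset.sum_congr rfl fun i _ => ?_
    rw [← Finset.sum_add_distrib]
    exact Finset.sum_congr rfl fun j _ => by ring
  have flip : ∑ i, ∑ j, (C i j * x j * x j - C i j * x i * x j)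
      = ∑ i, ∑ j, (C i j * x i * x i - C i j * x i * x j) := by
    rw [Finset.sum_comm]
    refine Finset.sum_congr rfl fun i _ => Finset.sum_congr rfl fun j _ => ?_
    rw [hsym]; ring
  rw [lhs, key, flip]; ring

lemma lap_quad_nonneg {n : ℕ} (C : Matrix (Fin n) (Fin n) ℝ) (hC : Cᵀ = C)
    (h0 : ∀ i j, 0 ≤ C i j) (x : Fin n → ℝ) : 0 ≤ x ⬝ᵥ (lap C *ᵥ x) := by
  rw [lap_quad C hC x]
  have : (0:ℝ) ≤ ∑ i, ∑ j, C i j * (x i - x j)^2 :=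
    Finset.sum_nonneg fun i _ => Finset.sum_nonneg fun j _ =>
      mul_nonneg (h0 i j) (sq_nonneg _)
  linarith

lemma lap_quad_eq_zero {n : ℕ} (C : Matrix (Fin n) (Fin n) ℝ) (hC : Cᵀ = C)
    (h0 : ∀ i j, 0 ≤ C i j) (x : Fin n → ℝ) (hx : x ⬝ᵥ (lap C *ᵥ x) = 0) :
    ∀ i j, C i j ≠ 0 → x i = x j := by
  rw [lap_quad C hC x] at hx
  have hsum : ∑ i, ∑ j, C i j * (x i - x j)^2 = 0 := by linarith
  have hterm : ∀ i ∈ Finset.univ, ∑ j, C i j * (x i - x j)^2 = 0 := by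
    refine (Finset.sum_eq_zero_iff_of_nonneg ?_).mp hsum
    intro i _
    exact Finset.sum_nonneg fun j _ => mul_nonneg (h0 i j) (sq_nonneg _)
  intro i j hne
  have h2 : C i j * (x i - x j)^2 = 0 := by
    refine (Finset.sum_eq_zero_iff_of_nonneg ?_).mp (hterm i (Finset.mem_univ i)) j
      (Finset.mem_univ j)
    intro j _; exact mul_nonneg (h0 i j) (sq_nonneg _)
  rcases mul_eq_zero.mp h2 with h | h
  · exact absurd h hne
  · have := sq_eq_zero_iff.mp h; linarith

lemma lap_transpose {n : ℕ} (C : Matrix (Fin n) (Fin n) ℝ) (hC : Cᵀ = C) :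
    (lap C)ᵀ = lap C := by
  simp [lap, transpose_sub, diagonal_transpose, hC]

lemma dot_mulVec_symm {n : ℕ} (L : Matrix (Fin n) (Fin n) ℝ) (hL : Lᵀ = L)
    (x y : Fin n → ℝ) : x ⬝ᵥ (L *ᵥ y) = y ⬝ᵥ (L *ᵥ x) := by
  calc x ⬝ᵥ (L *ᵥ y) = (x ᵥ* L) ⬝ᵥ y := dotProduct_mulVec x L y
    _ = (Lᵀ *ᵥ x) ⬝ᵥ y := by rw [Matrix.mulVec_transpose]
    _ = (L *ᵥ x) ⬝ᵥ y := by rw [hL]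
    _ = y ⬝ᵥ (L *ᵥ x) := dotProduct_comm _ _

lemma lap_sub_smul {n : ℕ} (C1 C2 : Matrix (Fin n) (Fin n) ℝ) (c : ℝ) :
    lap (C1 - c • C2) = lap C1 - c • lap C2 := by
  unfold lap
  ext i j
  simp only [Matrix.sub_apply, Matrix.smul_apply, diagonal_apply, smul_eq_mul,
    Finset.sum_sub_distrib, Finset.mul_sum]
  split_ifs with h
  · rw [mul_sub, Finset.mul_sum]; ring
  · ring

lemma energy_mono {n : ℕ} (C1 C2 : Matrix (Fin n) (Fin n) ℝ)
    (h1 : C1ᵀ = C1) (h2 : C2ᵀ = C2)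
    (hpos2 : ∀ i j, 0 ≤ C2 i j) (c : ℝ) (hc : 0 < c)
    (hdiff : ∀ i j, c * C2 i j ≤ C1 i j)
    (f v1 v2 : Fin n → ℝ)
    (hv1 : lap C1 *ᵥ v1 = f) (hv2 : lap C2 *ᵥ v2 = f) :
    f ⬝ᵥ v1 ≤ (1/c) * (f ⬝ᵥ v2) := by
  set L2 := lap C2 with hL2
  have hL2sym : L2ᵀ = L2 := lap_transpose C2 h2
  have hDsym : (C1 - c • C2)ᵀ = C1 - c • C2 := by
    rw [transpose_sub, transpose_smul, h1, h2]
  have hDpos : ∀ i j, 0 ≤ (C1 - c • C2) i j := fun i j => by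
    have := hdiff i j
    simp only [Matrix.sub_apply, Matrix.smul_apply, smul_eq_mul]
    linarith
  -- fact1 : f⬝v1 = energy of v1 in C1
  have fact1 : f ⬝ᵥ v1 = v1 ⬝ᵥ (lap C1 *ᵥ v1) := by
    rw [hv1, dotProduct_comm]
  -- fact2 : c * (v1 energy in C2) ≤ v1 energy in C1
  have fact2 : c * (v1 ⬝ᵥ (L2 *ᵥ v1)) ≤ v1 ⬝ᵥ (lap C1 *ᵥ v1) := by
    have h0 : 0 ≤ v1 ⬝ᵥ (lap (C1 - c • C2) *ᵥ v1) :=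
      lap_quad_nonneg _ hDsym hDpos v1
    rw [lap_sub_smul] at h0
    have hexp : v1 ⬝ᵥ ((lap C1 - c • L2) *ᵥ v1)
        = v1 ⬝ᵥ (lap C1 *ᵥ v1) - c * (v1 ⬝ᵥ (L2 *ᵥ v1)) := by
      rw [Matrix.sub_mulVec, dotProduct_sub, Matrix.smul_mulVec, dotProduct_smul,
        smul_eq_mul]
    linarith [hexp ▸ h0]
  -- fact3 : expansion of the nonneg energy of v2 - c•v1 in C2
  have fact3 : 0 ≤ f ⬝ᵥ v2 - 2 * c * (f ⬝ᵥ v1) + c^2 * (v1 ⬝ᵥ (L2 *ᵥ v1)) := by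
    have h0 : 0 ≤ (v2 - c • v1) ⬝ᵥ (L2 *ᵥ (v2 - c • v1)) :=
      lap_quad_nonneg _ h2 hpos2 _
    have hexp : (v2 - c • v1) ⬝ᵥ (L2 *ᵥ (v2 - c • v1))
        = v2 ⬝ᵥ (L2 *ᵥ v2) - 2 * c * (v1 ⬝ᵥ (L2 *ᵥ v2)) + c^2 * (v1 ⬝ᵥ (L2 *ᵥ v1)) := by
      have hsymm := dot_mulVec_symm L2 hL2sym v2 v1
      simp only [Matrix.mulVec_sub, Matrix.mulVec_smul, dotProduct_sub, sub_dotProduct,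
        dotProduct_smul, smul_dotProduct, smul_eq_mul, hsymm]
      ring
    have e1 : v2 ⬝ᵥ (L2 *ᵥ v2) = f ⬝ᵥ v2 := by rw [hv2, dotProduct_comm]
    have e2 : v1 ⬝ᵥ (L2 *ᵥ v2) = f ⬝ᵥ v1 := by rw [hv2, dotProduct_comm]
    rw [hexp, e1, e2] at h0
    exact h0
  have key : c * (f ⬝ᵥ v1) ≤ f ⬝ᵥ v2 := by nlinarith
  rw [← mul_le_mul_iff_right₀ hc]
  have heq : c * (1/c * (f ⬝ᵥ v2)) = f ⬝ᵥ v2 := by field_simp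
  rw [heq]
  exact key

lemma adjMat_symm {n : ℕ} (P : Matrix (Fin n) (Fin n) ℝ) : (adjMat P)ᵀ = adjMat P := by
  ext i j
  simp only [transpose_apply, adjMat, of_apply]
  congr 1
  apply propext
  constructor <;> rintro ⟨h1, h2⟩ <;> exact ⟨Ne.symm h1, Or.symm h2⟩

lemma pow_entry_nonneg {n : ℕ} (P : Matrix (Fin n) (Fin n) ℝ) (h0 : ∀ i j, 0 ≤ P i j) :
    ∀ (k : ℕ) (i j : Fin n), 0 ≤ (P ^ k) i j := by
  intro k
  induction k with
  | zero => intro i j; simp [Matrix.one_apply]; split_ifs <;> norm_num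
  | succ k ih =>
    intro i j
    rw [pow_succ, Matrix.mul_apply]
    exact Finset.sum_nonneg fun m _ => mul_nonneg (ih i m) (h0 m j)

lemma adj_connected {n : ℕ} (P : Matrix (Fin n) (Fin n) ℝ) (hP : IsConsensus P)
    (x : Fin n → ℝ) (hx : ∀ i j, adjMat P i j ≠ 0 → x i = x j) :
    ∀ i j, x i = x j := by
  have h0 := hP.1
  have step : ∀ m j, P m j ≠ 0 → x m = x j := by
    intro m j hmj
    by_cases hm : m = j
    · rw [hm]
    · refine hx m j ?_
      simp only [adjMat, of_apply]
      rw [if_pos ⟨hm, Or.inl hmj⟩]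
      norm_num
  have key : ∀ (k : ℕ) (i j : Fin n), 0 < (P ^ k) i j → x i = x j := by
    intro k
    induction k with
    | zero =>
      intro i j hij
      rw [pow_zero, Matrix.one_apply] at hij
      split_ifs at hij with h
      · rw [h]
      · exact absurd hij (lt_irrefl 0)
    | succ k ih =>
      intro i j hij
      rw [pow_succ, Matrix.mul_apply] at hij
      have : ∃ m, 0 < (P ^ k) i m * P m j := by
        by_contra hcon
        push_neg at hcon
        have hz : ∀ m ∈ Finset.univ, (P ^ k) i m * P m j = 0 := fun m _ =>
          le_antisymm (hcon m) (mul_nonneg (pow_entry_nonneg P h0 k i m) (h0 m j))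
        rw [Finset.sum_eq_zero hz] at hij
        exact lt_irrefl 0 hij
      obtain ⟨m, hm⟩ := this
      have hpm : 0 < (P ^ k) i m :=
        lt_of_le_of_ne (pow_entry_nonneg P h0 k i m) (by
          intro h; rw [← h] at hm; simp at hm)
      have hmj : P m j ≠ 0 := by
        intro h; rw [h, mul_zero] at hm; exact lt_irrefl 0 hm
      exact (ih i m hpm).trans (step m j hmj)
  intro i j
  obtain ⟨k, hk⟩ := hP.2.2.1 i j
  exact key k i j hk

lemma single_dot {n : ℕ} (a b : Fin n) (v : Fin n → ℝ) :
    (Pi.single a 1 - Pi.single b 1) ⬝ᵥ v = v a - v b := by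
  simp [dotProduct, sub_mul, Finset.sum_sub_distrib, Pi.single_apply, Finset.sum_ite_eq]

lemma exists_adj_sol {n : ℕ} (P : Matrix (Fin n) (Fin n) ℝ) (hP : IsConsensus P)
    (a b : Fin n) :
    ∃ v : Fin n → ℝ, lap (adjMat P) *ᵥ v = Pi.single a 1 - Pi.single b 1 := by
  classical
  set A := adjMat P with hA
  set L := lap A with hL
  have hA0 : ∀ i j, 0 ≤ A i j := by
    intro i j
    simp only [hA, adjMat, of_apply]
    split_ifs <;> norm_num
  have hAs : Aᵀ = A := adjMat_symm P
  have hLs : Lᵀ = L := lap_transpose A hAs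
  set T := Matrix.toEuclideanLin L with hT
  set f0 : Fin n → ℝ := Pi.single a 1 - Pi.single b 1 with hf0
  set f : EuclideanSpace ℝ (Fin n) := (WithLp.equiv 2 (Fin n → ℝ)).symm f0 with hf
  have hmem : f ∈ LinearMap.range T := by
    rw [← Submodule.orthogonal_orthogonal (LinearMap.range T)]
    rw [Submodule.mem_orthogonal]
    intro y hy
    set y' : Fin n → ℝ := WithLp.equiv 2 (Fin n → ℝ) y with hy'
    have hyT : (inner ℝ (T y) y : ℝ) = 0 :=
      (Submodule.mem_orthogonal _ y).mp hy (T y) ⟨y, rfl⟩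
    have hinner : (inner ℝ (T y) y : ℝ) = (L *ᵥ y') ⬝ᵥ y' := by
      rw [PiLp.inner_apply]
      refine Finset.sum_congr rfl fun i _ => ?_
      rw [RCLike.inner_apply, starRingEnd_apply, star_trivial, mul_comm]
      congr 1
    have hq : y' ⬝ᵥ (L *ᵥ y') = 0 := by
      rw [dotProduct_comm, ← hinner, hyT]
    have hedge : ∀ i j, A i j ≠ 0 → y' i = y' j :=
      lap_quad_eq_zero A hAs hA0 y' hq
    have hconst : y' a = y' b := adj_connected P hP y' hedge a b
    have : (inner ℝ y f : ℝ) = f0 ⬝ᵥ y' := by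
      rw [PiLp.inner_apply]
      rw [dotProduct_comm]
      refine Finset.sum_congr rfl fun i _ => ?_
      rw [RCLike.inner_apply, starRingEnd_apply, star_trivial, mul_comm]
      rfl
    rw [this, single_dot, hconst, sub_self]
  obtain ⟨v, hv⟩ := hmem
  refine ⟨WithLp.equiv 2 (Fin n → ℝ) v, ?_⟩
  funext i
  have := congrFun (congrArg (WithLp.equiv 2 (Fin n → ℝ)) hv) i
  rw [Matrix.toEuclideanLin_apply] at this
  exact this

lemma entry_bound {n : ℕ} (P : Matrix (Fin n) (Fin n) ℝ) (mu : Fin n → ℝ)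
    (hP : IsConsensus P) (hmupos : ∀ i, 0 < mu i)
    (mumin pmin : ℝ) (hmm : ∀ i, mumin ≤ mu i) (hmmpos : 0 < mumin)
    (hpm : ∀ i j, P i j ≠ 0 → pmin ≤ P i j) (hppos : 0 < pmin) :
    ∀ i j, ((n : ℝ) * mumin * pmin ^ 2) * adjMat P i j
      ≤ ((n : ℝ) • (Pᵀ * Matrix.diagonal mu * P)) i j := by
  intro i j
  have h0 := hP.1
  have hentry : (Pᵀ * Matrix.diagonal mu * P) i j = ∑ w, P w i * mu w * P w j := by
    rw [Matrix.mul_apply]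
    exact Finset.sum_congr rfl fun w _ => by rw [Matrix.mul_diagonal]; rfl
  have hterm : ∀ w, 0 ≤ P w i * mu w * P w j := fun w =>
    mul_nonneg (mul_nonneg (h0 w i) (hmupos w).le) (h0 w j)
  have hsum0 : 0 ≤ ∑ w, P w i * mu w * P w j :=
    Finset.sum_nonneg fun w _ => hterm w
  rw [Matrix.smul_apply, smul_eq_mul, hentry]
  simp only [adjMat, of_apply]
  split_ifs with hcond
  · obtain ⟨hne, hor⟩ := hcond
    have hkey : mumin * pmin ^ 2 ≤ ∑ w, P w i * mu w * P w j := by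
      rcases hor with hij | hji
      · have hstep : mumin * pmin ^ 2 ≤ P i i * mu i * P i j := by
          have h1 : pmin ≤ P i i := hpm i i (ne_of_gt (hP.2.2.2 i))
          have h2 : mumin ≤ mu i := hmm i
          have h3 : pmin ≤ P i j := hpm i j hij
          have h4 : pmin * mumin ≤ P i i * mu i :=
            mul_le_mul h1 h2 hmmpos.le (hppos.le.trans h1)
          calc mumin * pmin ^ 2 = (pmin * mumin) * pmin := by ring
            _ ≤ (P i i * mu i) * P i j :=
              mul_le_mul h4 h3 hppos.le (mul_nonneg (h0 i i) (hmupos i).le)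
        exact hstep.trans (Finset.single_le_sum (fun w _ => hterm w) (Finset.mem_univ i))
      · have hstep : mumin * pmin ^ 2 ≤ P j i * mu j * P j j := by
          have h1 : pmin ≤ P j i := hpm j i hji
          have h2 : mumin ≤ mu j := hmm j
          have h3 : pmin ≤ P j j := hpm j j (ne_of_gt (hP.2.2.2 j))
          have h4 : pmin * mumin ≤ P j i * mu j :=
            mul_le_mul h1 h2 hmmpos.le (hppos.le.trans h1)
          calc mumin * pmin ^ 2 = (pmin * mumin) * pmin := by ring
            _ ≤ (P j i * mu j) * P j j :=
              mul_le_mul h4 h3 hppos.le (mul_nonneg (h0 j i) (hmupos j).le)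
        exact hstep.trans (Finset.single_le_sum (fun w _ => hterm w) (Finset.mem_univ j))
    calc (n : ℝ) * mumin * pmin ^ 2 * 1 = (n : ℝ) * (mumin * pmin ^ 2) := by ring
      _ ≤ (n : ℝ) * ∑ w, P w i * mu w * P w j :=
        mul_le_mul_of_nonneg_left hkey (Nat.cast_nonneg n)
  · rw [mul_zero]
    exact mul_nonneg (Nat.cast_nonneg n) hsum0

lemma pair_bound {n : ℕ} (P : Matrix (Fin n) (Fin n) ℝ) (mu : Fin n → ℝ)
    (hP : IsConsensus P) (hmupos : ∀ i, 0 < mu i)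
    (mumin pmin : ℝ) (hmm : ∀ i, mumin ≤ mu i) (hmmpos : 0 < mumin)
    (hpm : ∀ i j, P i j ≠ 0 → pmin ≤ P i j) (hppos : 0 < pmin) (hn : 0 < n)
    (a b : Fin n) :
    effRes ((n : ℝ) • (Pᵀ * Matrix.diagonal mu * P)) a b
      ≤ (1 / ((n : ℝ) * mumin * pmin ^ 2)) * effRes (adjMat P) a b := by
  classical
  set C : Matrix (Fin n) (Fin n) ℝ := (n : ℝ) • (Pᵀ * Matrix.diagonal mu * P) with hCdef
  set c : ℝ := (n : ℝ) * mumin * pmin ^ 2 with hcdef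
  have hc : 0 < c := by
    have : (0:ℝ) < (n:ℝ) := Nat.cast_pos.mpr hn
    positivity
  have hCs : Cᵀ = C := by
    rw [hCdef, transpose_smul]
    congr 1
    rw [transpose_mul, transpose_mul, transpose_transpose, diagonal_transpose,
      Matrix.mul_assoc]
  have hAs : (adjMat P)ᵀ = adjMat P := adjMat_symm P
  have hA0 : ∀ i j, 0 ≤ adjMat P i j := by
    intro i j
    simp only [adjMat, of_apply]
    split_ifs <;> norm_num
  have hdiff : ∀ i j, c * adjMat P i j ≤ C i j := by
    intro i j
    have := entry_bound P mu hP hmupos mumin pmin hmm hmmpos hpm hppos i j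
    rw [hcdef, hCdef]
    linarith
  set f : Fin n → ℝ := Pi.single a 1 - Pi.single b 1 with hfdef
  have hA : ∃ v : Fin n → ℝ, lap (adjMat P) *ᵥ v = f := exists_adj_sol P hP a b
  unfold effRes
  rw [dif_pos hA]
  by_cases hE : ∃ v : Fin n → ℝ, lap C *ᵥ v = f
  · rw [dif_pos hE]
    have h1 := hE.choose_spec
    have h2 := hA.choose_spec
    have hmain := energy_mono C (adjMat P) hCs hAs hA0 c hc hdiff f
      hE.choose hA.choose h1 h2
    rw [single_dot, single_dot] at hmain
    exact hmain
  · rw [dif_neg hE]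
    have h2 := hA.choose_spec
    have hnn : 0 ≤ f ⬝ᵥ hA.choose := by
      have hq := lap_quad_nonneg (adjMat P) hAs hA0 hA.choose
      rw [h2, dotProduct_comm] at hq
      exact hq
    rw [single_dot] at hnn
    exact mul_nonneg (by positivity) hnn

/-- `R̄(C_{P*P}) ≤ (1/(n mumin pmin²)) R̄(G(P))`. -/
theorem stmt17 {n : ℕ} (P : Matrix (Fin n) (Fin n) ℝ) (mu : Fin n → ℝ)
    (hP : IsConsensus P) (hmu : IsInvMeasure P mu)
    (mumin pmin : ℝ)
    (hmin : (∀ i, mumin ≤ mu i) ∧ ∃ i, mu i = mumin)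
    (hpmin : (∀ i j, P i j ≠ 0 → pmin ≤ P i j) ∧ ∃ i j, P i j ≠ 0 ∧ P i j = pmin) :
    avgRes ((n : ℝ) • (Pᵀ * Matrix.diagonal mu * P)) ≤
      (1 / ((n : ℝ) * mumin * pmin ^ 2)) * avgRes (adjMat P) := by
  obtain ⟨hmupos, hsum, -⟩ := hmu
  have hn : 0 < n := by
    rcases Nat.eq_zero_or_pos n with h | h
    · exfalso; subst h; simpa using hsum
    · exact h
  have hmmpos : 0 < mumin := by
    obtain ⟨i, hi⟩ := hmin.2
    rw [← hi]; exact hmupos i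
  have hppos : 0 < pmin := by
    obtain ⟨i, j, hne, heq⟩ := hpmin.2
    rw [← heq]; exact lt_of_le_of_ne (hP.1 i j) (Ne.symm hne)
  have hpair : ∀ a b : Fin n,
      effRes ((n : ℝ) • (Pᵀ * Matrix.diagonal mu * P)) a b
        ≤ (1 / ((n : ℝ) * mumin * pmin ^ 2)) * effRes (adjMat P) a b :=
    fun a b => pair_bound P mu hP hmupos mumin pmin hmin.1 hmmpos hpmin.1 hppos hn a b
  unfold avgRes
  have hS : ∑ u, ∑ v, effRes ((n : ℝ) • (Pᵀ * Matrix.diagonal mu * P)) u v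
      ≤ (1 / ((n : ℝ) * mumin * pmin ^ 2)) * ∑ u, ∑ v, effRes (adjMat P) u v := by
    rw [Finset.mul_sum]
    refine Finset.sum_le_sum fun u _ => ?_
    rw [Finset.mul_sum]
    exact Finset.sum_le_sum fun v _ => hpair u v
  have hk : (0:ℝ) ≤ 1 / (2 * (n : ℝ) ^ 2) := by positivity
  calc (1 / (2 * (n : ℝ) ^ 2)) * ∑ u, ∑ v, effRes ((n : ℝ) • (Pᵀ * Matrix.diagonal mu * P)) u v
      ≤ (1 / (2 * (n : ℝ) ^ 2)) *
        ((1 / ((n : ℝ) * mumin * pmin ^ 2)) * ∑ u, ∑ v, effRes (adjMat P) u v) :=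
        mul_le_mul_of_nonneg_left hS hk
    _ = (1 / ((n : ℝ) * mumin * pmin ^ 2)) *
        ((1 / (2 * (n : ℝ) ^ 2)) * ∑ u, ∑ v, effRes (adjMat P) u v) := by ring
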